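/- Let π: E → M be a fiber bundle with dim M = m+1 and fix a volume form η on M. There is a bundle isomorphism Ψ: Mπ = Λ^{m+1}_2 E → J¹π^† over E, characterized by ⟨Ψ(ω), j¹_x φ⟩ η_x = φ*_x(ω) for all ω ∈ Λ^{m+1}_2 E over φ(x) and all jets j¹_x φ, identifying the bundle of 2-horizontal (m+1)-forms with the affine dual of J¹π. -/

import Mathlib

open scoped BigOperators

namespace Stmt13


variable {m n : ℕ}

noncomputable def bE (m : ℕ) : Module.Basis (Fin (m+1)) ℝ (Fin (m+1) → ℝ) := Pi.basisFun ℝ _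

lemma of_bE_eq_one : (Matrix.of fun a b => bE m a b) = (1 : Matrix (Fin (m+1)) (Fin (m+1)) ℝ) := by
  ext a b
  simp [bE, Matrix.one_apply, Pi.single_apply, eq_comm]

/-- The key identity: for any alternating form and any linear `γ`,
evaluation on the graph frame scales by the determinant. -/
theorem prop1 (ω : ((Fin (m+1) → ℝ) × (Fin n → ℝ)) [⋀^Fin (m+1)]→ₗ[ℝ] ℝ)
    (γ : (Fin (m+1) → ℝ) →ₗ[ℝ] (Fin n → ℝ)) (v : Fin (m+1) → (Fin (m+1) → ℝ)) :
    (ω fun j => (bE m j, γ (bE m j))) * Matrix.det (Matrix.of fun a b => v a b)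
      = ω fun j => (v j, γ (v j)) := by
  classical
  set f : (Fin (m+1) → ℝ) [⋀^Fin (m+1)]→ₗ[ℝ] ℝ :=
    ω.compLinearMap (LinearMap.prod LinearMap.id γ) with hf
  have happ : ∀ w : Fin (m+1) → (Fin (m+1) → ℝ), f w = ω fun j => (w j, γ (w j)) := by
    intro w; rfl
  have h2 := f.eq_smul_basis_det (bE m)
  have h3 : f v = f (bE m) * (bE m).det v := by
    conv_lhs => rw [h2]
    simp
  have h4 : (bE m).det v = Matrix.det (Matrix.of fun a b => v a b) := by
    rw [Module.Basis.det_apply]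
    rw [show (bE m).toMatrix v = (Matrix.of fun a b => v a b).transpose by
      ext a b
      simp [Module.Basis.toMatrix_apply, bE, Matrix.transpose_apply]]
    exact Matrix.det_transpose _
  rw [← happ, ← happ, h3, h4]




noncomputable def bP (m n : ℕ) : Module.Basis (Fin (m+1) ⊕ Fin n) ℝ ((Fin (m+1) → ℝ) × (Fin n → ℝ)) :=
  (bE m).prod (Pi.basisFun ℝ (Fin n))

lemma bP_inl (k : Fin (m+1)) : bP m n (Sum.inl k) = (bE m k, 0) :=
  Prod.ext (Module.Basis.prod_apply_inl_fst _ _ _) (Module.Basis.prod_apply_inl_snd _ _ _)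

lemma bP_inr (a : Fin n) : bP m n (Sum.inr a) = (0, Pi.single a 1) :=
  Prod.ext (Module.Basis.prod_apply_inr_fst _ _ _)
    ((Module.Basis.prod_apply_inr_snd _ _ _).trans (Pi.basisFun_apply _ _ _))

theorem ext_of_graph (ω₁ ω₂ : ((Fin (m+1) → ℝ) × (Fin n → ℝ)) [⋀^Fin (m+1)]→ₗ[ℝ] ℝ)
    (h₁ : ∀ X : Fin (m+1) → ((Fin (m+1) → ℝ) × (Fin n → ℝ)),
      (∃ a b : Fin (m+1), a ≠ b ∧ (X a).1 = 0 ∧ (X b).1 = 0) → ω₁ X = 0)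
    (h₂ : ∀ X : Fin (m+1) → ((Fin (m+1) → ℝ) × (Fin n → ℝ)),
      (∃ a b : Fin (m+1), a ≠ b ∧ (X a).1 = 0 ∧ (X b).1 = 0) → ω₂ X = 0)
    (h : ∀ (γ : (Fin (m+1) → ℝ) →ₗ[ℝ] (Fin n → ℝ)) (v : Fin (m+1) → (Fin (m+1) → ℝ)),
      (ω₁ fun j => (v j, γ (v j))) = ω₂ fun j => (v j, γ (v j))) :
    ω₁ = ω₂ := by
  classical
  refine Module.Basis.ext_alternating (bP m n) fun v hv => ?_
  set X : Fin (m+1) → ((Fin (m+1) → ℝ) × (Fin n → ℝ)) := fun j => bP m n (v j) with hX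
  by_cases htwo : ∃ p q : Fin (m+1), p ≠ q ∧ (∃ a, v p = Sum.inr a) ∧ (∃ b, v q = Sum.inr b)
  · obtain ⟨p, q, hpq, ⟨a, ha⟩, ⟨b, hb⟩⟩ := htwo
    have hz : (X p).1 = 0 ∧ (X q).1 = 0 := by
      constructor <;> simp [hX, ha, hb, bP_inr]
    rw [h₁ X ⟨p, q, hpq, hz.1, hz.2⟩, h₂ X ⟨p, q, hpq, hz.1, hz.2⟩]
  · set w : Fin (m+1) → Fin (m+1) := fun j => Sum.elim id (fun _ => 0) (v j) with hw
    by_cases hex : ∃ i a, v i = Sum.inr a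
    · obtain ⟨i, a, hia⟩ := hex
      have hinl : ∀ j, j ≠ i → v j = Sum.inl (w j) := by
        intro j hj
        rcases hvj : v j with k | b
        · simp [hw, hvj]
        · exact absurd ⟨j, i, hj, ⟨b, hvj⟩, ⟨a, hia⟩⟩ htwo
      -- find k₀ not in the image of w on univ.erase i
      set im : Finset (Fin (m+1)) := (Finset.univ.erase i).image w with him
      have hcard : im.card < m + 1 := by
        have h1 : im.card ≤ (Finset.univ.erase i).card := Finset.card_image_le
        have h2 : (Finset.univ.erase i).card = m := by
          rw [Finset.card_erase_of_mem (Finset.mem_univ i), Finset.card_univ, Fintype.card_fin]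
          rfl
        omega
      have hk₀ : ∃ k₀, k₀ ∉ im := by
        by_contra hc
        push_neg at hc
        have : im = Finset.univ := Finset.eq_univ_iff_forall.mpr hc
        rw [this, Finset.card_univ, Fintype.card_fin] at hcard
        omega
      obtain ⟨k₀, hk₀⟩ := hk₀
      set γ : (Fin (m+1) → ℝ) →ₗ[ℝ] (Fin n → ℝ) :=
        (LinearMap.proj k₀).smulRight (Pi.single a (1:ℝ)) with hγ
      set v' : Fin (m+1) → (Fin (m+1) → ℝ) :=
        fun j => if j = i then bE m k₀ else bE m (w j) with hv'
      have hγv' : ∀ j, j ≠ i → γ (v' j) = 0 := by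
        intro j hj
        have hwj : w j ∈ im := Finset.mem_image.mpr ⟨j, Finset.mem_erase.mpr ⟨hj, Finset.mem_univ j⟩, rfl⟩
        have hne : w j ≠ k₀ := fun hh => hk₀ (hh ▸ hwj)
        simp [hγ, hv', hj, bE, Pi.single_apply, hne]
      have hγi : γ (v' i) = Pi.single a 1 := by
        simp [hγ, hv', bE, LinearMap.smulRight_apply, LinearMap.proj_apply,
          Pi.single_eq_same]
      have hXj : ∀ j, j ≠ i → X j = (v' j, (0 : Fin n → ℝ)) := by
        intro j hj
        rw [hX]
        simp only [hinl j hj, bP_inl, hv', if_neg hj]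
      have key : (fun j => (v' j, γ (v' j)))
          = Function.update X i (bE m k₀, (Pi.single a 1 : Fin n → ℝ)) := by
        funext j
        by_cases hj : j = i
        · subst hj
          rw [Function.update_self, hγi]
          congr 1
          simp [hv']
        · rw [Function.update_of_ne hj, hXj j hj, hγv' j hj]
      have key0 : (fun j => (v' j, (0:(Fin (m+1) → ℝ) →ₗ[ℝ] (Fin n → ℝ)) (v' j)))
          = Function.update X i (bE m k₀, (0 : Fin n → ℝ)) := by
        funext j
        by_cases hj : j = i
        · subst hj; rw [Function.update_self]; simp [hv']
        · rw [Function.update_of_ne hj, hXj j hj]; simp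
      have hXi : X i = ((0 : Fin (m+1) → ℝ), (Pi.single a 1 : Fin n → ℝ)) := by
        rw [hX]; simp only [hia, bP_inr]
      have decomp : ∀ ω : ((Fin (m+1) → ℝ) × (Fin n → ℝ)) [⋀^Fin (m+1)]→ₗ[ℝ] ℝ,
          (ω fun j => (v' j, γ (v' j)))
            = (ω fun j => (v' j, (0:(Fin (m+1) → ℝ) →ₗ[ℝ] (Fin n → ℝ)) (v' j))) + ω X := by
        intro ω
        rw [key, key0]
        have : ((bE m k₀ : Fin (m+1) → ℝ), (Pi.single a 1 : Fin n → ℝ))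
            = ((bE m k₀ : Fin (m+1) → ℝ), (0 : Fin n → ℝ)) + (0, Pi.single a 1) := by
          simp
        rw [this, AlternatingMap.map_update_add]
        congr 1
        rw [← hXi, Function.update_eq_self]
      have e1 := decomp ω₁
      have e2 := decomp ω₂
      rw [h γ v'] at e1
      rw [h 0 v'] at e1
      rw [e2] at e1
      exact (add_left_cancel e1).symm
    · push_neg at hex
      have hinl : ∀ j, v j = Sum.inl (w j) := by
        intro j
        rcases hvj : v j with k | b
        · simp [hw, hvj]
        · exact absurd hvj (hex j b)
      have : X = fun j => ((fun j => bE m (w j)) j,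
          (0:(Fin (m+1) → ℝ) →ₗ[ℝ] (Fin n → ℝ)) ((fun j => bE m (w j)) j)) := by
        funext j
        rw [hX]
        simp only [hinl j, bP_inl]
        simp
      rw [this]
      exact h 0 _





/-- The linear map extracting, from `(x, y)`, the row `x` with its `k`-th entry replaced by `y a`. -/
def T (k : Fin (m+1)) (a : Fin n) :
    ((Fin (m+1) → ℝ) × (Fin n → ℝ)) →ₗ[ℝ] (Fin (m+1) → ℝ) where
  toFun p := fun l => if l = k then p.2 a else p.1 l
  map_add' p q := by funext l; by_cases h : l = k <;> simp [h]
  map_smul' c p := by funext l; by_cases h : l = k <;> simp [h]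

noncomputable def D0 (m n : ℕ) :
    ((Fin (m+1) → ℝ) × (Fin n → ℝ)) [⋀^Fin (m+1)]→ₗ[ℝ] ℝ :=
  Matrix.detRowAlternating.compLinearMap (LinearMap.fst ℝ _ _)

noncomputable def D (k : Fin (m+1)) (a : Fin n) :
    ((Fin (m+1) → ℝ) × (Fin n → ℝ)) [⋀^Fin (m+1)]→ₗ[ℝ] ℝ :=
  Matrix.detRowAlternating.compLinearMap (T k a)

noncomputable def E (k : Fin (m+1)) (a : Fin n) : (Fin (m+1) → ℝ) →ₗ[ℝ] (Fin n → ℝ) :=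
  (LinearMap.proj k).smulRight (Pi.single a 1)

noncomputable def omegaOf (c : ℝ) (L : ((Fin (m+1) → ℝ) →ₗ[ℝ] (Fin n → ℝ)) →ₗ[ℝ] ℝ) :
    ((Fin (m+1) → ℝ) × (Fin n → ℝ)) [⋀^Fin (m+1)]→ₗ[ℝ] ℝ :=
  c • D0 m n + ∑ k : Fin (m+1), ∑ a : Fin n, (L (E k a)) • D k a

lemma sIndicator (k : Fin (m+1)) :
    (fun l => if l = k then (1:ℝ) else 0) = Pi.single k 1 := by
  funext l; simp [Pi.single_apply]

lemma D0_horizontal (X : Fin (m+1) → ((Fin (m+1) → ℝ) × (Fin n → ℝ)))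
    (p : Fin (m+1)) (hp : (X p).1 = 0) : D0 m n X = 0 := by
  have hD : D0 m n X = Matrix.detRowAlternating (fun j => (X j).1) := rfl
  rw [hD]
  exact AlternatingMap.map_coord_zero _ p hp

lemma D_horizontal (k : Fin (m+1)) (a : Fin n)
    (X : Fin (m+1) → ((Fin (m+1) → ℝ) × (Fin n → ℝ)))
    (p q : Fin (m+1)) (hpq : p ≠ q) (hp : (X p).1 = 0) (hq : (X q).1 = 0) :
    D k a X = 0 := by
  classical
  set s : Fin (m+1) → ℝ := fun l => if l = k then (1:ℝ) else 0 with hs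
  set r : Fin (m+1) → (Fin (m+1) → ℝ) := fun j => T k a (X j) with hr
  have hDX : D k a X = Matrix.detRowAlternating r := rfl
  have hrp : r p = (X p).2 a • s := by
    funext l
    by_cases h : l = k <;> simp [hr, hs, T, h, hp]
  have hrq : r q = (X q).2 a • s := by
    funext l
    by_cases h : l = k <;> simp [hr, hs, T, h, hq]
  have step1 : Matrix.detRowAlternating r
      = (X p).2 a • Matrix.detRowAlternating (Function.update r p s) := by
    conv_lhs => rw [← Function.update_eq_self p r, hrp]
    rw [AlternatingMap.map_update_smul]
  have h1 : (Function.update r p s) q = (X q).2 a • s := by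
    rw [Function.update_of_ne (Ne.symm hpq)]
    exact hrq
  have step2 : Matrix.detRowAlternating (Function.update r p s)
      = (X q).2 a • Matrix.detRowAlternating
          (Function.update (Function.update r p s) q s) := by
    conv_lhs => rw [← Function.update_eq_self q (Function.update r p s), h1]
    rw [AlternatingMap.map_update_smul]
  have hzero : Matrix.detRowAlternating
      (Function.update (Function.update r p s) q s) = 0 := by
    refine AlternatingMap.map_eq_zero_of_eq _ _ (i := p) (j := q) ?_ hpq
    rw [Function.update_of_ne hpq, Function.update_self, Function.update_self]
  rw [hDX, step1, step2, hzero, smul_zero, smul_zero]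

lemma alt_sum_apply {ι' : Type*} [DecidableEq ι'] (s : Finset ι')
    (F : ι' → (((Fin (m+1) → ℝ) × (Fin n → ℝ)) [⋀^Fin (m+1)]→ₗ[ℝ] ℝ))
    (X : Fin (m+1) → ((Fin (m+1) → ℝ) × (Fin n → ℝ))) :
    (∑ i ∈ s, F i) X = ∑ i ∈ s, F i X := by
  induction s using Finset.induction with
  | empty => simp
  | insert _ _ h ih => rw [Finset.sum_insert h, Finset.sum_insert h, AlternatingMap.add_apply, ih]

lemma omegaOf_horizontal (c : ℝ) (L : ((Fin (m+1) → ℝ) →ₗ[ℝ] (Fin n → ℝ)) →ₗ[ℝ] ℝ)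
    (X : Fin (m+1) → ((Fin (m+1) → ℝ) × (Fin n → ℝ)))
    (hX : ∃ a b : Fin (m+1), a ≠ b ∧ (X a).1 = 0 ∧ (X b).1 = 0) :
    omegaOf c L X = 0 := by
  obtain ⟨p, q, hpq, hp, hq⟩ := hX
  rw [omegaOf]
  rw [AlternatingMap.add_apply, AlternatingMap.smul_apply, D0_horizontal X p hp]
  have : (∑ k : Fin (m+1), ∑ a : Fin n, (L (E k a)) • D k a) X = 0 := by
    rw [alt_sum_apply]
    refine Finset.sum_eq_zero fun k _ => ?_
    rw [alt_sum_apply]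
    refine Finset.sum_eq_zero fun a _ => ?_
    rw [AlternatingMap.smul_apply, D_horizontal k a X p q hpq hp hq, smul_zero]
  rw [this, smul_zero, zero_add]



lemma D0_graph (γ : (Fin (m+1) → ℝ) →ₗ[ℝ] (Fin n → ℝ)) :
    D0 m n (fun j => (bE m j, γ (bE m j))) = 1 := by
  have h0 : D0 m n (fun j => (bE m j, γ (bE m j)))
      = Matrix.det (Matrix.of fun a b => bE m a b) := rfl
  rw [h0, of_bE_eq_one, Matrix.det_one]

lemma D_graph (k : Fin (m+1)) (a : Fin n) (γ : (Fin (m+1) → ℝ) →ₗ[ℝ] (Fin n → ℝ)) :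
    D k a (fun j => (bE m j, γ (bE m j))) = γ (bE m k) a := by
  classical
  have h0 : D k a (fun j => (bE m j, γ (bE m j)))
      = Matrix.det (Matrix.of fun j => T k a (bE m j, γ (bE m j))) := rfl
  have h1 : (Matrix.of fun j => T k a (bE m j, γ (bE m j)))
      = (1 : Matrix (Fin (m+1)) (Fin (m+1)) ℝ).updateCol k (fun j => γ (bE m j) a) := by
    ext j l
    rw [Matrix.updateCol_apply]
    by_cases h : l = k
    · simp [h, T]
    · have := congrFun (congrFun of_bE_eq_one j) l
      simp only [Matrix.of_apply] at this
      simp [h, T, ← this]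
  rw [h0, h1, ← Matrix.cramer_apply, Matrix.cramer_one]
  simp

lemma gamma_decomp (γ : (Fin (m+1) → ℝ) →ₗ[ℝ] (Fin n → ℝ)) :
    ∑ k : Fin (m+1), ∑ a : Fin n, (γ (bE m k) a) • E k a = γ := by
  classical
  apply LinearMap.ext; intro x
  have hbE : ∀ i : Fin (m+1), (fun j => if i = j then (1:ℝ) else 0) = bE m i := by
    intro i; funext j; simp [bE, Pi.single_apply, eq_comm]
  have hx : γ x = ∑ i : Fin (m+1), x i • γ (bE m i) := by
    rw [LinearMap.pi_apply_eq_sum_univ γ x]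
    exact Finset.sum_congr rfl fun i _ => by rw [hbE i]
  funext b
  rw [LinearMap.sum_apply]
  simp only [LinearMap.sum_apply, LinearMap.smul_apply, Finset.sum_apply, Pi.smul_apply,
    E, LinearMap.smulRight_apply, LinearMap.proj_apply, hx]
  simp [Pi.single_apply, mul_ite, Finset.mul_sum, Finset.sum_ite_eq]
  exact Finset.sum_congr rfl fun i _ => by ring

lemma omegaOf_graph (c : ℝ) (L : ((Fin (m+1) → ℝ) →ₗ[ℝ] (Fin n → ℝ)) →ₗ[ℝ] ℝ)
    (γ : (Fin (m+1) → ℝ) →ₗ[ℝ] (Fin n → ℝ)) :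
    omegaOf c L (fun j => (bE m j, γ (bE m j))) = c + L γ := by
  classical
  rw [omegaOf, AlternatingMap.add_apply, AlternatingMap.smul_apply, D0_graph, alt_sum_apply]
  have hsum : ∀ k : Fin (m+1),
      (∑ a : Fin n, (L (E k a)) • D k a) (fun j => (bE m j, γ (bE m j)))
        = ∑ a : Fin n, (L (E k a)) * (γ (bE m k) a) := by
    intro k
    rw [alt_sum_apply]
    exact Finset.sum_congr rfl fun a _ => by
      rw [AlternatingMap.smul_apply, D_graph, smul_eq_mul]
  rw [Finset.sum_congr rfl fun k _ => hsum k]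
  have hL : L γ = ∑ k : Fin (m+1), ∑ a : Fin n, (L (E k a)) * (γ (bE m k) a) := by
    conv_lhs => rw [← gamma_decomp γ]
    rw [map_sum]
    exact Finset.sum_congr rfl fun k _ => by
      rw [map_sum]
      exact Finset.sum_congr rfl fun a _ => by
        rw [map_smul, smul_eq_mul, mul_comm]
  rw [← hL, smul_eq_mul, mul_one]




lemma expand (ω : ((Fin (m+1) → ℝ) × (Fin n → ℝ)) [⋀^Fin (m+1)]→ₗ[ℝ] ℝ)
    (hω : ∀ X : Fin (m+1) → ((Fin (m+1) → ℝ) × (Fin n → ℝ)),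
      (∃ a b : Fin (m+1), a ≠ b ∧ (X a).1 = 0 ∧ (X b).1 = 0) → ω X = 0)
    (y : Fin (m+1) → (Fin n → ℝ)) :
    ω (fun j => (bE m j, y j))
      = ω (fun j => (bE m j, 0))
        + ∑ i : Fin (m+1),
            ω (Function.update (fun j => ((bE m j : Fin (m+1) → ℝ), (0:Fin n → ℝ))) i
              ((0:Fin (m+1) → ℝ), y i)) := by
  classical
  set base : Fin (m+1) → ((Fin (m+1) → ℝ) × (Fin n → ℝ)) :=
    fun j => (bE m j, (0:Fin n → ℝ)) with hbase
  set fib : Fin (m+1) → ((Fin (m+1) → ℝ) × (Fin n → ℝ)) :=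
    fun j => ((0:Fin (m+1) → ℝ), y j) with hfib
  have hsplit : (fun j => ((bE m j : Fin (m+1) → ℝ), y j)) = base + fib := by
    funext j
    apply Prod.ext <;> simp [hbase, hfib]
  have hadd : ω (base + fib) = ∑ s : Finset (Fin (m+1)), ω (s.piecewise base fib) :=
    ω.toMultilinearMap.map_add_univ base fib
  set A : Finset (Finset (Fin (m+1))) :=
    insert Finset.univ (Finset.univ.image fun i => Finset.univ.erase i) with hA
  have hzero : ∀ s ∈ (Finset.univ : Finset (Finset (Fin (m+1)))), s ∉ A →
      ω (s.piecewise base fib) = 0 := by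
    intro s _ hs
    have h1 : s ≠ Finset.univ := by
      intro h; exact hs (by rw [hA, h]; exact Finset.mem_insert_self _ _)
    have hp : ∃ p, p ∉ s := by
      by_contra hc
      push_neg at hc
      exact h1 (Finset.eq_univ_iff_forall.mpr hc)
    obtain ⟨p, hp⟩ := hp
    have hsub : s ⊆ Finset.univ.erase p := by
      intro x hx
      exact Finset.mem_erase.mpr ⟨fun h => hp (h ▸ hx), Finset.mem_univ x⟩
    have hne : s ≠ Finset.univ.erase p := by
      intro h
      refine hs ?_
      rw [hA, h]
      exact Finset.mem_insert_of_mem (Finset.mem_image.mpr ⟨p, Finset.mem_univ p, rfl⟩)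
    obtain ⟨q, hq1, hq2⟩ := Finset.exists_of_ssubset (lt_of_le_of_ne hsub hne)
    have hqp : q ≠ p := (Finset.mem_erase.mp hq1).1
    have hvals : ((s.piecewise base fib) p).1 = 0 ∧ ((s.piecewise base fib) q).1 = 0 := by
      constructor
      · rw [Finset.piecewise_eq_of_notMem _ _ _ hp]
      · rw [Finset.piecewise_eq_of_notMem _ _ _ hq2]
    exact hω _ ⟨p, q, fun h => hqp h.symm, hvals.1, hvals.2⟩
  have huniv_notmem : Finset.univ ∉ Finset.univ.image fun i : Fin (m+1) => Finset.univ.erase i := by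
    intro h
    obtain ⟨i, _, hi⟩ := Finset.mem_image.mp h
    have := congrArg Finset.card hi
    rw [Finset.card_erase_of_mem (Finset.mem_univ i), Finset.card_univ, Fintype.card_fin] at this
    omega
  have hinj : ∀ i ∈ (Finset.univ : Finset (Fin (m+1))), ∀ i' ∈ (Finset.univ : Finset (Fin (m+1))),
      Finset.univ.erase i = Finset.univ.erase i' → i = i' := by
    intro i _ i' _ h
    by_contra hne
    have : i ∈ Finset.univ.erase i' := Finset.mem_erase.mpr ⟨hne, Finset.mem_univ i⟩
    rw [← h] at this
    exact (Finset.mem_erase.mp this).1 rfl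
  have hsum : ∑ s : Finset (Fin (m+1)), ω (s.piecewise base fib)
      = ∑ s ∈ A, ω (s.piecewise base fib) :=
    (Finset.sum_subset (Finset.subset_univ A) hzero).symm
  rw [hsplit, hadd, hsum, hA, Finset.sum_insert huniv_notmem, Finset.sum_image hinj]
  congr 1
  · rw [Finset.piecewise_univ]
  · refine Finset.sum_congr rfl fun i _ => ?_
    rw [Finset.piecewise_erase_univ]

noncomputable def Lpart (ω : ((Fin (m+1) → ℝ) × (Fin n → ℝ)) [⋀^Fin (m+1)]→ₗ[ℝ] ℝ) :
    (((Fin (m+1) → ℝ) →ₗ[ℝ] (Fin n → ℝ)) →ₗ[ℝ] ℝ) :=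
  ∑ i : Fin (m+1),
    (ω.toMultilinearMap.toLinearMap (fun j => ((bE m j : Fin (m+1) → ℝ), (0:Fin n → ℝ))) i).comp
      ((LinearMap.inr ℝ (Fin (m+1) → ℝ) (Fin n → ℝ)).comp (LinearMap.applyₗ (bE m i)))

lemma Lpart_apply (ω : ((Fin (m+1) → ℝ) × (Fin n → ℝ)) [⋀^Fin (m+1)]→ₗ[ℝ] ℝ)
    (γ : (Fin (m+1) → ℝ) →ₗ[ℝ] (Fin n → ℝ)) :
    Lpart ω γ = ∑ i : Fin (m+1),
      ω (Function.update (fun j => ((bE m j : Fin (m+1) → ℝ), (0:Fin n → ℝ))) i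
        ((0:Fin (m+1) → ℝ), γ (bE m i))) := by
  rw [Lpart, LinearMap.sum_apply]
  refine Finset.sum_congr rfl fun i _ => ?_
  rw [LinearMap.comp_apply, LinearMap.comp_apply]
  have h1 : (LinearMap.applyₗ (M₂ := Fin n → ℝ) (bE m i)) γ = γ (bE m i) := rfl
  rw [h1, LinearMap.inr_apply, MultilinearMap.toLinearMap_apply]
  rfl

lemma psi_affine (ω : ((Fin (m+1) → ℝ) × (Fin n → ℝ)) [⋀^Fin (m+1)]→ₗ[ℝ] ℝ)
    (hω : ∀ X : Fin (m+1) → ((Fin (m+1) → ℝ) × (Fin n → ℝ)),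
      (∃ a b : Fin (m+1), a ≠ b ∧ (X a).1 = 0 ∧ (X b).1 = 0) → ω X = 0) :
    ∃ g : ((Fin (m+1) → ℝ) →ₗ[ℝ] (Fin n → ℝ)) →ᵃ[ℝ] ℝ,
      (fun γ : (Fin (m+1) → ℝ) →ₗ[ℝ] (Fin n → ℝ) => ω (fun j => (bE m j, γ (bE m j)))) = ⇑g := by
  refine ⟨(Lpart ω).toAffineMap + AffineMap.const ℝ _ (ω fun j => (bE m j, 0)), ?_⟩
  funext γ
  have h := expand ω hω (fun j => γ (bE m j))
  simp only [AffineMap.coe_add, Pi.add_apply, LinearMap.coe_toAffineMap, AffineMap.coe_const,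
    Function.const_apply]
  rw [h, Lpart_apply]
  ring


end Stmt13

/-- fiberwise, in the linear model with volume form `η = d^{m+1}x`:
there is a unique map `Ψ` from the 2-horizontal `(m+1)`-forms on
`T_uE = ℝ^{m+1} × ℝⁿ` (the fiber of `Mπ = Λ^{m+1}_2 E`) to real-valued functions on
the jets at `u` (identified with the linear maps `γ : T_xM → fiber`, `T_xM = ℝ^{m+1}`),
characterized by `⟨Ψ(ω), j¹φ⟩ η = φ*(ω)`, i.e.
`Ψ(ω)(γ) · d^{m+1}x(v₁,…,v_{m+1}) = ω((v₁, γv₁),…,(v_{m+1}, γv_{m+1}))`;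
moreover `Ψ` is a bijection onto the affine maps, identifying `Mπ` with the affine
dual `J¹π^†`. -/
theorem stmt13 (m n : ℕ) :
    ∃! Ψ : {ω : ((Fin (m+1) → ℝ) × (Fin n → ℝ)) [⋀^Fin (m+1)]→ₗ[ℝ] ℝ //
        ∀ X : Fin (m+1) → ((Fin (m+1) → ℝ) × (Fin n → ℝ)),
          (∃ a b : Fin (m+1), a ≠ b ∧ (X a).1 = 0 ∧ (X b).1 = 0) → ω X = 0} →
        (((Fin (m+1) → ℝ) →ₗ[ℝ] (Fin n → ℝ)) → ℝ),
      (∀ ω (γ : (Fin (m+1) → ℝ) →ₗ[ℝ] (Fin n → ℝ))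
          (v : Fin (m+1) → (Fin (m+1) → ℝ)),
        Ψ ω γ * Matrix.det (Matrix.of fun a b => v a b) =
          ω.1 (fun j => (v j, γ (v j)))) ∧
      Function.Injective Ψ ∧
      (∀ ω, ∃ g : ((Fin (m+1) → ℝ) →ₗ[ℝ] (Fin n → ℝ)) →ᵃ[ℝ] ℝ, Ψ ω = ⇑g) ∧
      (∀ g : ((Fin (m+1) → ℝ) →ₗ[ℝ] (Fin n → ℝ)) →ᵃ[ℝ] ℝ, ∃ ω, Ψ ω = ⇑g) := by
    classical
  refine ⟨fun ω γ => ω.1 (fun j => (Stmt13.bE m j, γ (Stmt13.bE m j))), ⟨?_, ?_, ?_, ?_⟩, ?_⟩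
  · intro ω γ v
    exact Stmt13.prop1 ω.1 γ v
  · intro ω₁ ω₂ hΨ
    apply Subtype.ext
    refine Stmt13.ext_of_graph ω₁.1 ω₂.1 ω₁.2 ω₂.2 fun γ v => ?_
    rw [← Stmt13.prop1 ω₁.1 γ v, ← Stmt13.prop1 ω₂.1 γ v]
    have h : (ω₁.1 fun j => (Stmt13.bE m j, γ (Stmt13.bE m j)))
        = ω₂.1 fun j => (Stmt13.bE m j, γ (Stmt13.bE m j)) := congrFun hΨ γ
    rw [h]
  · intro ω
    exact Stmt13.psi_affine ω.1 ω.2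
  · intro g
    refine ⟨⟨Stmt13.omegaOf (g 0) g.linear,
      fun X hX => Stmt13.omegaOf_horizontal _ _ X hX⟩, ?_⟩
    funext γ
    have h1 := Stmt13.omegaOf_graph (g 0) g.linear γ
    have h2 := congrFun (AffineMap.decomp g) γ
    simp only [Pi.add_apply, Function.const_apply] at h2
    show (Stmt13.omegaOf (g 0) g.linear) (fun j => (Stmt13.bE m j, γ (Stmt13.bE m j))) = g γ
    rw [h1, h2]
    ring
  · intro Ψ' hΨ'
    obtain ⟨hprop, -, -, -⟩ := hΨ'
    funext ω γ
    have hthis := hprop ω γ (fun j => Stmt13.bE m j)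
    rw [Stmt13.of_bE_eq_one, Matrix.det_one, mul_one] at hthis
    exact hthis
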